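/- Expectation of the ordered-pair double sum over a CorgiPile shuffle (the key identity used to bound I₁₁). Let N ≥ 2 and let (u_{i,j})_{i≠j} be any family of vectors in ℝ^d indexed by ordered pairs of distinct indices i, j ∈ {1,…,m} (in the paper, u_{i,j} = H_i(x*)·∇f_j(x_0^s), the Hessian of f_i at x* applied to the gradient of f_j at x_0^s). Then E_ψ[Σ_{k=1}^{nb} Σ_{k'=1}^{k−1} u_{ψ(k),ψ(k')}] = (n/(2N))·Σ_{l=1}^N Σ_{i≠j, i,j∈B_l} u_{i,j} + (n(n−1)/(2N(N−1)))·Σ_{l≠l'} Σ_{i∈B_l, j∈B_{l'}} u_{i,j}, where the expectation is over a CorgiPile shuffle ψ. -/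

import Mathlib

open Finset

noncomputable section

/-- Euclidean space `ℝ^d`. -/
abbrev Eu (d : ℕ) : Type := EuclideanSpace ℝ (Fin d)

/-- A CorgiPile shuffle: a set of `n` blocks (out of `N`) together with an injection
from the `n*b` positions onto the set of indices belonging to the chosen blocks. -/
def CorgiShuffle (N n b : ℕ) (blk : Fin (N * b) → Fin N) : Type :=
  { p : Finset (Fin N) × (Fin (n * b) → Fin (N * b)) //
      p.1.card = n ∧ Function.Injective p.2 ∧
      (∀ k, blk (p.2 k) ∈ p.1) ∧
      (∀ i, blk i ∈ p.1 → ∃ k, p.2 k = i) }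

noncomputable instance (N n b : ℕ) (blk : Fin (N * b) → Fin N) :
    Fintype (CorgiShuffle N n b blk) := by
  unfold CorgiShuffle; exact Fintype.ofFinite _

/-- The `l`-th block, as a finset of indices. -/
def blockSet {N b : ℕ} (blk : Fin (N * b) → Fin N) (l : Fin N) : Finset (Fin (N * b)) :=
  Finset.univ.filter (fun i => blk i = l)

/- ### Auxiliary lemmas -/

lemma card_supersets {γ : Type*} [DecidableEq γ] [Fintype γ] (A : Finset γ) (n : ℕ)
    (hA : A.card ≤ n) :
    ((Finset.univ.powersetCard n).filter (fun S => A ⊆ S)).card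
      = (Fintype.card γ - A.card).choose (n - A.card) := by
  have key : ((Finset.univ \ A).powersetCard (n - A.card)).card
      = (Fintype.card γ - A.card).choose (n - A.card) := by
    rw [card_powersetCard, card_sdiff_of_subset (subset_univ A), card_univ]
  rw [← key]
  apply Finset.card_bij (fun S _ => S \ A)
  · intro S hS
    simp only [mem_filter, mem_powersetCard] at hS
    simp only [mem_powersetCard]
    exact ⟨sdiff_subset_sdiff (subset_univ S) le_rfl,
      by rw [card_sdiff_of_subset hS.2, hS.1.2]⟩
  · intro S1 h1 S2 h2 h
    simp only [mem_filter, mem_powersetCard] at h1 h2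
    rw [← sdiff_union_of_subset h1.2, ← sdiff_union_of_subset h2.2, h]
  · intro T hT
    simp only [mem_powersetCard] at hT
    have hdisj : Disjoint T A := by
      refine disjoint_left.2 fun a ha haA => ?_
      have := hT.1 ha
      simp at this
      exact this haA
    refine ⟨T ∪ A, ?_, ?_⟩
    · simp only [mem_filter, mem_powersetCard]
      refine ⟨⟨subset_univ _, ?_⟩, subset_union_right⟩
      rw [card_union_of_disjoint hdisj, hT.2, Nat.sub_add_cancel hA]
    · exact union_sdiff_cancel_right hdisj

lemma card_supersets_zero {γ : Type*} [DecidableEq γ] [Fintype γ] (A : Finset γ) (n : ℕ)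
    (hA : n < A.card) :
    ((Finset.univ.powersetCard n).filter (fun S => A ⊆ S)).card = 0 := by
  rw [Finset.card_eq_zero, Finset.filter_eq_empty_iff]
  intro S hS hsub
  simp only [mem_powersetCard] at hS
  exact absurd (Finset.card_le_card hsub) (by omega)

lemma pair_avg {V : Type*} [AddCommGroup V] [Module ℝ V] {M : ℕ} {γ : Type*}
    [Fintype γ] [DecidableEq γ] (hM : Fintype.card γ = M) (v : γ → γ → V) :
    ∑ e : Fin M ≃ γ, ∑ k : Fin M, ∑ k' : Fin M, (if k' < k then v (e k) (e k') else 0)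
      = ((M.factorial : ℝ) / 2) •
          ∑ i : γ, ∑ j : γ, (if i = j then 0 else v i j) := by
  have hcard : Fintype.card (Fin M ≃ γ) = M.factorial := by
    rw [Fintype.card_equiv (Fintype.equivOfCardEq (by simp [hM]))]
    simp
  set A := ∑ e : Fin M ≃ γ, ∑ k : Fin M, ∑ k' : Fin M,
      (if k' < k then v (e k) (e k') else 0) with hA
  set W := ∑ i : γ, ∑ j : γ, (if i = j then 0 else v i j) with hW
  have hAB : A = ∑ e : Fin M ≃ γ, ∑ k : Fin M, ∑ k' : Fin M,
      (if k < k' then v (e k) (e k') else 0) := by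
    have hbij : Function.Bijective (fun e : Fin M ≃ γ => Fin.revPerm.trans e) := by
      constructor
      · intro e1 e2 h
        apply Equiv.ext
        intro k
        have := Equiv.ext_iff.1 h (Fin.rev k)
        simpa using this
      · intro e
        exact ⟨Fin.revPerm.trans e, by ext k; simp⟩
    rw [hA]
    rw [Fintype.sum_bijective _ hbij _
      (fun e => ∑ k : Fin M, ∑ k' : Fin M,
        (if k' < k then v (e (Fin.rev k)) (e (Fin.rev k')) else 0))
      (fun e => by simp)]
    congr 1
    ext e
    calc ∑ k : Fin M, ∑ k' : Fin M,
          (if k' < k then v (e (Fin.rev k)) (e (Fin.rev k')) else 0)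
        = ∑ k : Fin M, ∑ k' : Fin M,
            (if Fin.rev k < Fin.rev k' then v (e (Fin.rev k)) (e (Fin.rev k')) else 0) := by
          congr 1; ext k; congr 1; ext k'
          congr 1
          simp [Fin.rev_lt_rev]
      _ = ∑ k : Fin M, ∑ k' : Fin M, (if k < k' then v (e k) (e k') else 0) := by
          rw [← Equiv.sum_comp Fin.revPerm
            (fun k => ∑ k' : Fin M, (if k < k' then v (e k) (e k') else 0))]
          congr 1; ext k
          rw [← Equiv.sum_comp Fin.revPerm
            (fun k' => (if Fin.revPerm k < k' then v (e (Fin.revPerm k)) (e k') else 0))]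
          simp [Fin.revPerm_apply]
  have h2A : (2 : ℝ) • A = (M.factorial : ℝ) • W := by
    have key : A + A = ∑ e : Fin M ≃ γ, W := by
      nth_rewrite 2 [hAB]
      rw [← Finset.sum_add_distrib]
      congr 1; ext e
      rw [← Finset.sum_add_distrib]
      rw [show W = ∑ k : Fin M, ∑ j : γ, (if e k = j then 0 else v (e k) j) from
        (Equiv.sum_comp e (fun i => ∑ j : γ, (if i = j then 0 else v i j))).symm]
      congr 1; ext k
      rw [← Finset.sum_add_distrib]
      rw [show (∑ j : γ, (if e k = j then 0 else v (e k) j))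
          = ∑ k' : Fin M, (if e k = e k' then 0 else v (e k) (e k')) from
        (Equiv.sum_comp e (fun j => (if e k = j then 0 else v (e k) j))).symm]
      congr 1; ext k'
      by_cases h : k = k'
      · subst h; simp
      · have h1 : ¬ (e k = e k') := fun hc => h (e.injective hc)
        simp only [h1, if_false]
        rcases lt_or_gt_of_ne h with hlt | hgt
        · simp [hlt, not_lt.2 hlt.le, hlt.ne']
        · simp [hgt, not_lt.2 hgt.le, hgt.ne']
    rw [Finset.sum_const, card_univ, hcard] at key
    rw [two_smul, key, Nat.cast_smul_eq_nsmul]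
  have h2 : (2 : ℝ) ≠ 0 := two_ne_zero
  have hfin := congrArg (fun x => (2 : ℝ)⁻¹ • x) h2A
  simp only [smul_smul, inv_mul_cancel₀ h2, one_smul] at hfin
  rw [hfin, div_eq_inv_mul, mul_comm]

def corgiEquivAux {N n b : ℕ} (blk : Fin (N * b) → Fin N)
    (x : Σ S : {S : Finset (Fin N) // S ∈ Finset.univ.powersetCard n},
        (Fin (n * b) ≃ {i : Fin (N * b) // blk i ∈ S.val})) : CorgiShuffle N n b blk :=
  ⟨(x.1.val, fun k => (x.2 k).val), by
    obtain ⟨⟨S, hS⟩, e⟩ := x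
    refine ⟨(Finset.mem_powersetCard.1 hS).2, ?_, fun k => (e k).2,
      fun i hi => ⟨e.symm ⟨i, hi⟩, by simp⟩⟩
    intro k k' h
    exact e.injective (Subtype.ext h)⟩

lemma corgiEquivAux_bijective {N n b : ℕ} (blk : Fin (N * b) → Fin N) :
    Function.Bijective (corgiEquivAux (N := N) (n := n) (b := b) blk) := by
  constructor
  · rintro ⟨⟨S1, hS1⟩, e1⟩ ⟨⟨S2, hS2⟩, e2⟩ h
    have hS : S1 = S2 := congrArg (fun ω => ω.val.1) h
    subst hS
    have he : (fun k => (e1 k).val) = fun k => (e2 k).val :=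
      congrArg (fun ω => ω.val.2) h
    refine Sigma.ext rfl (heq_of_eq ?_)
    apply Equiv.ext
    intro k
    exact Subtype.ext (congrFun he k)
  · intro ω
    obtain ⟨⟨S, f⟩, hcard, hinj, hmem, hsurj⟩ := ω
    refine ⟨⟨⟨S, Finset.mem_powersetCard.2 ⟨Finset.subset_univ S, hcard⟩⟩,
      Equiv.ofBijective (fun k => ⟨f k, hmem k⟩) ⟨?_, ?_⟩⟩, rfl⟩
    · intro k k' h
      exact hinj (congrArg Subtype.val h)
    · rintro ⟨i, hi⟩
      obtain ⟨k, hk⟩ := hsurj i hi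
      exact ⟨k, Subtype.ext hk⟩

lemma scalar_aux (A f c num den : ℝ) (hA : A ≠ 0) (hf : f ≠ 0) (hden : den ≠ 0)
    (h : num * A = den * c) : (A * f)⁻¹ * (f / 2) * c = num / (2 * den) := by
  field_simp
  linear_combination (-1) * h

set_option maxHeartbeats 1000000 in
/-- **Expectation of the ordered-pair double sum over a CorgiPile shuffle
(the key identity used to bound I₁₁).** For any family `u_{i,j}` of vectors indexed by
ordered pairs (only values at pairs of distinct indices matter),
`E_ψ[∑_{k=1}^{nb} ∑_{k'<k} u_{ψ(k),ψ(k')}]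
  = (n/(2N))·∑_l ∑_{i≠j∈B_l} u_{i,j}
    + (n(n−1)/(2N(N−1)))·∑_{l≠l'} ∑_{i∈B_l, j∈B_{l'}} u_{i,j}`. -/
theorem expectation_ordered_pair_double_sum_corgi_shuffle {d N n b : ℕ}
    (hN : 2 ≤ N) (hn1 : 1 ≤ n) (hnN : n ≤ N)
    (blk : Fin (N * b) → Fin N)
    (hblk : ∀ l, (blockSet blk l).card = b)
    (u : Fin (N * b) → Fin (N * b) → Eu d) :
    ((Fintype.card (CorgiShuffle N n b blk) : ℝ))⁻¹ •
        ∑ ω : CorgiShuffle N n b blk,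
          ∑ k : Fin (n * b), ∑ k' : Fin (n * b),
            (if k' < k then u (ω.val.2 k) (ω.val.2 k') else 0)
      = ((n : ℝ) / (2 * (N : ℝ))) •
          (∑ l, ∑ i ∈ blockSet blk l, ∑ j ∈ blockSet blk l,
            if i = j then 0 else u i j)
        + ((n : ℝ) * ((n : ℝ) - 1) / (2 * (N : ℝ) * ((N : ℝ) - 1))) •
            (∑ p ∈ Finset.univ.offDiag, ∑ i ∈ blockSet blk p.1, ∑ j ∈ blockSet blk p.2,
              u i j) := by
  classical
  -- abbreviations
  set pc : Finset (Finset (Fin N)) := Finset.univ.powersetCard n with hpc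
  set T : Finset (Fin N) → Finset (Fin (N * b)) :=
    fun S => Finset.univ.filter (fun i => blk i ∈ S) with hT
  -- cardinality of the index set of chosen blocks
  have hTcard : ∀ S : Finset (Fin N), S ∈ pc → (T S).card = n * b := by
    intro S hS
    have hSn : S.card = n := (Finset.mem_powersetCard.1 hS).2
    have hunion : T S = S.biUnion (blockSet blk) := by
      ext i
      simp [hT, blockSet]
    rw [hunion, Finset.card_biUnion]
    · rw [Finset.sum_congr rfl (fun l _ => hblk l), Finset.sum_const, hSn, smul_eq_mul]
    · intro l _ l' _ hll'
      refine Finset.disjoint_left.2 fun i hi hi' => hll' ?_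
      simp only [blockSet, mem_filter] at hi hi'
      rw [← hi.2, hi'.2]
  have hsubcard : ∀ S : {S // S ∈ pc},
      Fintype.card {i : Fin (N * b) // blk i ∈ S.val} = n * b := by
    intro S
    rw [Fintype.card_subtype]
    exact hTcard S.val S.2
  set X : Eu d := ∑ l, ∑ i ∈ blockSet blk l, ∑ j ∈ blockSet blk l,
      (if i = j then 0 else u i j) with hX
  set Y : Eu d := ∑ p ∈ Finset.univ.offDiag,
      ∑ i ∈ blockSet blk p.1, ∑ j ∈ blockSet blk p.2, u i j with hY
  set c1 : ℕ := (N - 1).choose (n - 1) with hc1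
  set c2 : ℕ := if 2 ≤ n then (N - 2).choose (n - 2) else 0 with hc2
  -- Step 1: rewrite the sum over shuffles via the bijection
  have hsum1 : (∑ ω : CorgiShuffle N n b blk,
        ∑ k : Fin (n * b), ∑ k' : Fin (n * b),
          (if k' < k then u (ω.val.2 k) (ω.val.2 k') else 0))
      = ∑ S : {S : Finset (Fin N) // S ∈ pc},
          ∑ e : Fin (n * b) ≃ {i : Fin (N * b) // blk i ∈ S.val},
            ∑ k : Fin (n * b), ∑ k' : Fin (n * b),
              (if k' < k then u (e k).val (e k').val else 0) := by
    rw [← Fintype.sum_bijective _ (corgiEquivAux_bijective (N := N) (n := n) (b := b) blk)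
      (fun x => ∑ k : Fin (n * b), ∑ k' : Fin (n * b),
        (if k' < k then u (x.2 k).val (x.2 k').val else 0))
      (fun ω => ∑ k : Fin (n * b), ∑ k' : Fin (n * b),
        (if k' < k then u (ω.val.2 k) (ω.val.2 k') else 0))
      (fun x => rfl)]
    rw [← Finset.univ_sigma_univ, Finset.sum_sigma]
  -- Step 2: inner sum over bijections
  have hsum2 : ∀ S : {S : Finset (Fin N) // S ∈ pc},
      (∑ e : Fin (n * b) ≃ {i : Fin (N * b) // blk i ∈ S.val},
          ∑ k : Fin (n * b), ∑ k' : Fin (n * b),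
            (if k' < k then u (e k).val (e k').val else 0))
        = (((n * b).factorial : ℝ) / 2) •
            ∑ i ∈ T S.val, ∑ j ∈ T S.val, (if i = j then 0 else u i j) := by
    intro S
    rw [pair_avg (hsubcard S) (fun i j => u i.val j.val)]
    congr 1
    rw [Finset.sum_subtype (p := fun x => blk x ∈ S.val) (T S.val) (fun x => by simp [hT])
      (fun i => ∑ j ∈ T S.val, (if i = j then 0 else u i j))]
    apply Finset.sum_congr rfl
    intro i _
    rw [Finset.sum_subtype (p := fun x => blk x ∈ S.val) (T S.val) (fun x => by simp [hT])
      (fun j => (if (i : Fin (N * b)) = j then 0 else u i j))]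
    apply Finset.sum_congr rfl
    intro j _
    congr 1
    simp [Subtype.ext_iff]
  -- Step 3: counting
  have hcnt : ∀ i j : Fin (N * b),
      (∑ S ∈ pc, (if blk i ∈ S ∧ blk j ∈ S then (if i = j then 0 else u i j) else 0))
        = ((if blk i = blk j then c1 else c2 : ℕ) : ℝ) • (if i = j then 0 else u i j) := by
    intro i j
    rw [← Finset.sum_filter, Finset.sum_const, ← Nat.cast_smul_eq_nsmul ℝ]
    congr 2
    have hAeq : pc.filter (fun S => blk i ∈ S ∧ blk j ∈ S)
        = pc.filter (fun S => ({blk i, blk j} : Finset (Fin N)) ⊆ S) := by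
      apply Finset.filter_congr
      intro S _
      simp [Finset.insert_subset_iff]
    rw [hAeq]
    by_cases hb : blk i = blk j
    · rw [if_pos hb, hb]
      have hpair : ({blk j, blk j} : Finset (Fin N)) = {blk j} := by simp
      rw [hpair, hpc, card_supersets _ _ (by simpa using hn1)]
      simp [hc1]
    · rw [if_neg hb]
      have hpair : ({blk i, blk j} : Finset (Fin N)).card = 2 := Finset.card_pair hb
      by_cases hn2 : 2 ≤ n
      · rw [hpc, card_supersets _ _ (by rw [hpair]; exact hn2)]
        rw [hpair]
        simp [hc2, hn2]
      · rw [hpc, card_supersets_zero _ _ (by omega)]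
        simp [hc2, hn2]
  -- Step 4: the sum over chosen block sets
  have hsum3 : (∑ S ∈ pc, ∑ i ∈ T S, ∑ j ∈ T S, (if i = j then 0 else u i j))
      = (c1 : ℝ) • X + (c2 : ℝ) • Y := by
    have hWS : ∀ S ∈ pc, (∑ i ∈ T S, ∑ j ∈ T S, (if i = j then 0 else u i j))
        = ∑ i : Fin (N * b), ∑ j : Fin (N * b),
            (if blk i ∈ S ∧ blk j ∈ S then (if i = j then 0 else u i j) else 0) := by
      intro S _
      rw [hT]
      rw [Finset.sum_filter]
      apply Finset.sum_congr rfl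
      intro i _
      rw [Finset.sum_filter]
      by_cases hi : blk i ∈ S
      · simp [hi]
      · simp [hi]
    rw [Finset.sum_congr rfl hWS, Finset.sum_comm]
    have : ∀ i : Fin (N * b), (∑ S ∈ pc, ∑ j : Fin (N * b),
        (if blk i ∈ S ∧ blk j ∈ S then (if i = j then 0 else u i j) else 0))
        = ∑ j : Fin (N * b), ((if blk i = blk j then c1 else c2 : ℕ) : ℝ) •
            (if i = j then 0 else u i j) := by
      intro i
      rw [Finset.sum_comm]
      exact Finset.sum_congr rfl (fun j _ => hcnt i j)
    rw [Finset.sum_congr rfl (fun i _ => this i)]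
    -- decompose by blocks
    have hfib : ∀ F : Fin (N * b) → Eu d,
        (∑ i : Fin (N * b), F i) = ∑ l, ∑ i ∈ blockSet blk l, F i := by
      intro F
      exact (Finset.sum_fiberwise Finset.univ blk F).symm
    rw [hfib]
    have hfib2 : ∀ l : Fin N, (∑ i ∈ blockSet blk l, ∑ j : Fin (N * b),
        ((if blk i = blk j then c1 else c2 : ℕ) : ℝ) • (if i = j then 0 else u i j))
        = ∑ l' : Fin N, ∑ i ∈ blockSet blk l, ∑ j ∈ blockSet blk l',
            ((if blk i = blk j then c1 else c2 : ℕ) : ℝ) • (if i = j then 0 else u i j) := by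
      intro l
      rw [Finset.sum_comm, hfib (fun j => ∑ i ∈ blockSet blk l,
        ((if blk i = blk j then c1 else c2 : ℕ) : ℝ) • (if i = j then 0 else u i j))]
      exact Finset.sum_congr rfl (fun l' _ => Finset.sum_comm)
    rw [Finset.sum_congr rfl (fun l _ => hfib2 l)]
    rw [← Finset.sum_product']
    rw [show (Finset.univ ×ˢ Finset.univ : Finset (Fin N × Fin N))
        = Finset.univ.diag ∪ Finset.univ.offDiag from (Finset.diag_union_offDiag _).symm]
    rw [Finset.sum_union (Finset.disjoint_diag_offDiag _)]
    congr 1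
    · rw [Finset.sum_diag, hX, Finset.smul_sum]
      apply Finset.sum_congr rfl
      intro l _
      rw [Finset.smul_sum]
      apply Finset.sum_congr rfl
      intro i hi
      rw [Finset.smul_sum]
      apply Finset.sum_congr rfl
      intro j hj
      simp only [blockSet, Finset.mem_filter] at hi hj
      rw [if_pos (hi.2.trans hj.2.symm)]
    · rw [hY, Finset.smul_sum]
      apply Finset.sum_congr rfl
      intro p hp
      rw [Finset.smul_sum]
      apply Finset.sum_congr rfl
      intro i hi
      rw [Finset.smul_sum]
      apply Finset.sum_congr rfl
      intro j hj
      simp only [blockSet, Finset.mem_filter] at hi hj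
      simp only [Finset.mem_offDiag, Finset.mem_univ, true_and] at hp
      have hbij : blk i ≠ blk j := by rw [hi.2, hj.2]; exact hp
      rw [if_neg hbij, if_neg (fun hij => hbij (by rw [hij]))]
  -- Step 5: cardinality
  have hCard : Fintype.card (CorgiShuffle N n b blk)
      = N.choose n * (n * b).factorial := by
    rw [← Fintype.card_of_bijective (corgiEquivAux_bijective (N := N) (n := n) (b := b) blk)]
    rw [Fintype.card_sigma]
    have heach : ∀ S : {S : Finset (Fin N) // S ∈ pc},
        Fintype.card (Fin (n * b) ≃ {i : Fin (N * b) // blk i ∈ S.val})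
          = (n * b).factorial := by
      intro S
      rw [Fintype.card_equiv (Fintype.equivOfCardEq (by simp [hsubcard S]))]
      simp
    rw [Finset.sum_congr rfl (fun S _ => heach S), Finset.sum_const, Finset.card_univ,
      Fintype.card_coe, hpc, Finset.card_powersetCard, Finset.card_univ, Fintype.card_fin,
      smul_eq_mul]
  -- Step 6: arithmetic
  have hNR : (2 : ℝ) ≤ (N : ℝ) := by exact_mod_cast hN
  have hNne : (N : ℝ) ≠ 0 := by linarith
  have hN1ne : (N : ℝ) - 1 ≠ 0 := by linarith
  have hCne : ((N.choose n : ℕ) : ℝ) ≠ 0 :=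
    Nat.cast_ne_zero.2 (Nat.choose_pos hnN).ne'
  have hfne : (((n * b).factorial : ℕ) : ℝ) ≠ 0 :=
    Nat.cast_ne_zero.2 (Nat.factorial_pos _).ne'
  have h1 : (n : ℝ) * (N.choose n : ℕ) = (N : ℝ) * (c1 : ℕ) := by
    have e1 := Nat.add_one_mul_choose_eq (N - 1) (n - 1)
    rw [Nat.sub_add_cancel (by omega),
      Nat.sub_add_cancel hn1] at e1
    have hnat : n * N.choose n = N * c1 := by
      rw [hc1, e1, Nat.mul_comm]
    exact_mod_cast hnat
  have h2 : (n : ℝ) * ((n : ℝ) - 1) * (N.choose n : ℕ)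
      = (N : ℝ) * ((N : ℝ) - 1) * (c2 : ℕ) := by
    by_cases hn2 : 2 ≤ n
    · have e1 := Nat.add_one_mul_choose_eq (N - 1) (n - 1)
      rw [Nat.sub_add_cancel (by omega),
        Nat.sub_add_cancel hn1] at e1
      have e2 := Nat.add_one_mul_choose_eq (N - 2) (n - 2)
      rw [(by omega : N - 2 + 1 = N - 1), (by omega : n - 2 + 1 = n - 1)] at e2
      have hnat : n * (n - 1) * N.choose n = N * (N - 1) * c2 := by
        rw [hc2, if_pos hn2]
        nlinarith [e1, e2]
      have hn1R : ((n : ℝ) - 1) = ((n - 1 : ℕ) : ℝ) := by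
        have : (1 : ℕ) ≤ n := hn1
        push_cast [Nat.cast_sub this]
        ring
      have hN1R : ((N : ℝ) - 1) = ((N - 1 : ℕ) : ℝ) := by
        have : (1 : ℕ) ≤ N := by omega
        push_cast [Nat.cast_sub this]
        ring
      rw [hn1R, hN1R]
      exact_mod_cast hnat
    · have hn1' : n = 1 := by omega
      rw [hc2, if_neg hn2]
      subst hn1'
      simp
  -- Finish
  have hfinal : (∑ ω : CorgiShuffle N n b blk,
        ∑ k : Fin (n * b), ∑ k' : Fin (n * b),
          (if k' < k then u (ω.val.2 k) (ω.val.2 k') else 0))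
      = (((n * b).factorial : ℝ) / 2) • ((c1 : ℝ) • X + (c2 : ℝ) • Y) := by
    rw [hsum1, Finset.sum_congr rfl (fun S _ => hsum2 S),
      Finset.sum_coe_sort pc (fun S => (((n * b).factorial : ℝ) / 2) •
        ∑ i ∈ T S, ∑ j ∈ T S, (if i = j then 0 else u i j)),
      ← Finset.smul_sum, hsum3]
  rw [hfinal, hCard]
  rw [smul_add, smul_add, smul_smul, smul_smul, smul_smul, smul_smul, Nat.cast_mul]
  rw [scalar_aux _ _ _ _ _ hCne hfne hNne h1,
    scalar_aux _ _ _ _ _ hCne hfne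
      (mul_ne_zero hNne hN1ne) h2,
    show (2 * ((N : ℝ) * ((N : ℝ) - 1))) = 2 * (N : ℝ) * ((N : ℝ) - 1) from by ring]

end
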